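/- Let p be a prime number, A a commutative ring, and B a commutative A-algebra with structure map ι : A → B, such that B is p-adically formally smooth over A (for every n ≥ 1, B/pⁿB is formally smooth over A/pⁿA) and p-adically separated and complete (IsAdicComplete with respect to the ideal (p) of B). Let σ : A → A be a Frobenius lift, i.e. a ring endomorphism with σ(a) ≡ a^p (mod pA) for all a ∈ A. Then there exists a ring endomorphism τ : B → B such that τ(ι(a)) = ι(σ(a)) for all a ∈ A and τ(b) ≡ b^p (mod pB) for all b ∈ B, i.e. τ is a Frobenius lift on B extending σ. -/

import Mathlib

universe u

section Aux

/-- Abstract lifting lemma: if `S` is formally smooth over `R`, `q : C → D` is a surjective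
ring hom with nilpotent kernel, `ψ : R → C` is a ring hom and `F : S → D` satisfies
`F ∘ (algebraMap R S) = q ∘ ψ`, then `F` lifts to `G : S → C` with `G ∘ algebraMap = ψ`. -/
theorem smooth_lift_ringhom {R S C D : Type u} [CommRing R] [CommRing S] [CommRing C]
    [CommRing D] [Algebra R S] [Algebra.FormallySmooth R S]
    (ψ : R →+* C) (q : C →+* D) (hq : Function.Surjective q)
    (hnil : IsNilpotent (RingHom.ker q))
    (F : S →+* D) (hF : ∀ r : R, F (algebraMap R S r) = q (ψ r)) :
    ∃ G : S →+* C, (∀ r : R, G (algebraMap R S r) = ψ r) ∧ ∀ s : S, q (G s) = F s := by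
  letI : Algebra R C := ψ.toAlgebra
  letI : Algebra R D := (q.comp ψ).toAlgebra
  let Fa : S →ₐ[R] D := ⟨F, fun r => hF r⟩
  let qa : C →ₐ[R] D := ⟨q, fun r => rfl⟩
  have hqs : Function.Surjective qa := hq
  have hker : IsNilpotent (RingHom.ker (qa : C →+* D)) := hnil
  let G := Algebra.FormallySmooth.liftOfSurjective Fa qa hqs hker
  refine ⟨G.toRingHom, fun r => G.commutes r, fun s => ?_⟩
  exact Algebra.FormallySmooth.liftOfSurjective_apply Fa qa hqs hker s

variable {p : ℕ} {A B : Type u} [CommRing A] [CommRing B] [Algebra A B]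

/-- The inductive step: a Frobenius-compatible map mod `pⁿ` lifts to one mod `pⁿ⁺¹`,
using formal smoothness of `B/pⁿ⁺¹B` over `A/pⁿ⁺¹A`. -/
theorem step_exists
    (g : ∀ n : ℕ, A ⧸ (Ideal.span {(p : A)} ^ n) →+* B ⧸ (Ideal.span {(p : B)} ^ n))
    (hg : ∀ (n : ℕ) (a : A),
      g n (Ideal.Quotient.mk (Ideal.span {(p : A)} ^ n) a) =
        Ideal.Quotient.mk (Ideal.span {(p : B)} ^ n) (algebraMap A B a))
    (hsmooth : ∀ n : ℕ, 1 ≤ n →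
      @Algebra.FormallySmooth (A ⧸ (Ideal.span {(p : A)} ^ n))
        (B ⧸ (Ideal.span {(p : B)} ^ n)) _ _ ((g n).toAlgebra))
    (σ : A →+* A) (n : ℕ) (hn : 1 ≤ n)
    (t : B →+* B ⧸ Ideal.span {(p : B)} ^ n)
    (ht : ∀ a : A, t (algebraMap A B a) =
      Ideal.Quotient.mk (Ideal.span {(p : B)} ^ n) (algebraMap A B (σ a))) :
    ∃ t' : B →+* B ⧸ Ideal.span {(p : B)} ^ (n + 1),
      (∀ a : A, t' (algebraMap A B a) =
        Ideal.Quotient.mk (Ideal.span {(p : B)} ^ (n + 1)) (algebraMap A B (σ a))) ∧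
      ∀ b : B, Ideal.Quotient.factor (Ideal.pow_le_pow_right n.le_succ) (t' b) = t b := by
  letI R := A ⧸ Ideal.span {(p : A)} ^ (n + 1)
  letI : Algebra R (B ⧸ Ideal.span {(p : B)} ^ (n + 1)) := (g (n + 1)).toAlgebra
  haveI : Algebra.FormallySmooth R (B ⧸ Ideal.span {(p : B)} ^ (n + 1)) :=
    hsmooth (n + 1) (by omega)
  have hAMS : (algebraMap R (B ⧸ Ideal.span {(p : B)} ^ (n + 1)) : R →+* _) = g (n + 1) :=
    RingHom.algebraMap_toAlgebra _
  -- the twisted structure map ψ : A/p^{n+1} → B/p^{n+1}, a ↦ ι(σ a)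
  have hψ0 : ∀ a ∈ Ideal.span {(p : A)} ^ (n + 1),
      (Ideal.Quotient.mk (Ideal.span {(p : B)} ^ (n + 1))) (algebraMap A B (σ a)) = 0 := by
    intro a ha
    rw [Ideal.span_singleton_pow, Ideal.mem_span_singleton] at ha
    obtain ⟨x, rfl⟩ := ha
    have h1 : σ ((p : A) ^ (n + 1) * x) = (p : A) ^ (n + 1) * σ x := by
      rw [map_mul, map_pow, map_natCast]
    rw [Ideal.Quotient.eq_zero_iff_mem, Ideal.span_singleton_pow, Ideal.mem_span_singleton,
      h1, map_mul, map_pow, map_natCast]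
    exact ⟨algebraMap A B (σ x), rfl⟩
  let ψ : R →+* B ⧸ Ideal.span {(p : B)} ^ (n + 1) :=
    Ideal.Quotient.lift (Ideal.span {(p : A)} ^ (n + 1))
      ((Ideal.Quotient.mk (Ideal.span {(p : B)} ^ (n + 1))).comp
        ((algebraMap A B).comp σ)) hψ0
  have hψ : ∀ a : A, ψ (Ideal.Quotient.mk _ a) =
      Ideal.Quotient.mk (Ideal.span {(p : B)} ^ (n + 1)) (algebraMap A B (σ a)) :=
    fun a => rfl
  let q : B ⧸ Ideal.span {(p : B)} ^ (n + 1) →+* B ⧸ Ideal.span {(p : B)} ^ n :=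
    Ideal.Quotient.factor (Ideal.pow_le_pow_right n.le_succ)
  have hq : ∀ b : B, q (Ideal.Quotient.mk _ b) = Ideal.Quotient.mk _ b :=
    fun b => Ideal.Quotient.factor_mk _ b
  have hqsurj : Function.Surjective q := by
    intro x
    obtain ⟨b, rfl⟩ := Ideal.Quotient.mk_surjective x
    exact ⟨Ideal.Quotient.mk _ b, hq b⟩
  have hqnil : IsNilpotent (RingHom.ker q) := by
    refine ⟨2, ?_⟩
    rw [pow_two, Ideal.zero_eq_bot, eq_bot_iff]
    refine Ideal.mul_le.mpr ?_
    intro x hx y hy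
    obtain ⟨b, rfl⟩ := Ideal.Quotient.mk_surjective x
    obtain ⟨c, rfl⟩ := Ideal.Quotient.mk_surjective y
    have hb : b ∈ Ideal.span {(p : B)} ^ n := by
      have h := RingHom.mem_ker.mp hx
      rw [hq b] at h
      exact Ideal.Quotient.eq_zero_iff_mem.mp h
    have hc : c ∈ Ideal.span {(p : B)} ^ n := by
      have h := RingHom.mem_ker.mp hy
      rw [hq c] at h
      exact Ideal.Quotient.eq_zero_iff_mem.mp h
    have hbc : b * c ∈ Ideal.span {(p : B)} ^ (n + 1) := by
      have h1 : b * c ∈ Ideal.span {(p : B)} ^ n * Ideal.span {(p : B)} ^ n :=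
        Ideal.mul_mem_mul hb hc
      rw [← pow_add] at h1
      exact Ideal.pow_le_pow_right (by omega) h1
    rw [Ideal.mem_bot, ← map_mul, Ideal.Quotient.eq_zero_iff_mem]
    exact hbc
  -- t factors through B/p^{n+1}
  have hfbar0 : ∀ b ∈ Ideal.span {(p : B)} ^ (n + 1), t b = 0 := by
    intro b hb
    rw [Ideal.span_singleton_pow, Ideal.mem_span_singleton] at hb
    obtain ⟨x, rfl⟩ := hb
    rw [map_mul]
    have hpn : t ((p : B) ^ (n + 1)) = 0 := by
      have h2 : (t (p : B)) = Ideal.Quotient.mk (Ideal.span {(p : B)} ^ n) (p : B) := by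
        rw [map_natCast, map_natCast]
      rw [map_pow, h2, ← map_pow, Ideal.Quotient.eq_zero_iff_mem, Ideal.span_singleton_pow,
        Ideal.mem_span_singleton]
      exact ⟨(p : B), pow_succ _ _⟩
    rw [hpn, zero_mul]
  let fbar : B ⧸ Ideal.span {(p : B)} ^ (n + 1) →+* B ⧸ Ideal.span {(p : B)} ^ n :=
    Ideal.Quotient.lift (Ideal.span {(p : B)} ^ (n + 1)) t hfbar0
  have hfbar : ∀ b : B, fbar (Ideal.Quotient.mk _ b) = t b :=
    fun b => Ideal.Quotient.lift_mk _ _ _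
  have hF : ∀ r : R, fbar (algebraMap R (B ⧸ Ideal.span {(p : B)} ^ (n + 1)) r) = q (ψ r) := by
    intro r
    obtain ⟨a, rfl⟩ := Ideal.Quotient.mk_surjective r
    rw [hAMS, hg, hfbar, ht, hψ, hq]
  obtain ⟨G, hG1, hG2⟩ := smooth_lift_ringhom ψ q hqsurj hqnil fbar hF
  refine ⟨G.comp (Ideal.Quotient.mk (Ideal.span {(p : B)} ^ (n + 1))), ?_, ?_⟩
  · intro a
    have h1 : Ideal.Quotient.mk (Ideal.span {(p : B)} ^ (n + 1)) (algebraMap A B a)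
        = algebraMap R (B ⧸ Ideal.span {(p : B)} ^ (n + 1)) (Ideal.Quotient.mk _ a) := by
      rw [hAMS]; exact (hg (n + 1) a).symm
    rw [RingHom.comp_apply, h1, hG1, hψ]
  · intro b
    rw [RingHom.comp_apply]
    exact (hG2 (Ideal.Quotient.mk _ b)).trans (hfbar b)

end Aux

/-- The level-one Frobenius: `b ↦ bᵖ mod p` is a ring hom `B → B/p¹B`. -/
noncomputable def frobOne {p : ℕ} {B : Type u} [CommRing B] (hp : p.Prime) :
    B →+* B ⧸ Ideal.span {(p : B)} ^ 1 where
  toFun b := Ideal.Quotient.mk _ (b ^ p)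
  map_one' := by
    show Ideal.Quotient.mk (Ideal.span {(p : B)} ^ 1) ((1 : B) ^ p) = 1
    rw [one_pow, map_one]
  map_mul' x y := by
    show Ideal.Quotient.mk (Ideal.span {(p : B)} ^ 1) ((x * y) ^ p)
      = Ideal.Quotient.mk _ (x ^ p) * Ideal.Quotient.mk _ (y ^ p)
    rw [mul_pow, map_mul]
  map_zero' := by
    show Ideal.Quotient.mk (Ideal.span {(p : B)} ^ 1) ((0 : B) ^ p) = 0
    rw [zero_pow hp.ne_zero, map_zero]
  map_add' x y := by
    show Ideal.Quotient.mk (Ideal.span {(p : B)} ^ 1) ((x + y) ^ p)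
      = Ideal.Quotient.mk _ (x ^ p) + Ideal.Quotient.mk _ (y ^ p)
    obtain ⟨r, hr⟩ := exists_add_pow_prime_eq hp x y
    rw [hr, map_add, map_add]
    have : Ideal.Quotient.mk (Ideal.span {(p : B)} ^ 1) ((p : B) * x * y * r) = 0 := by
      rw [Ideal.Quotient.eq_zero_iff_mem, pow_one, Ideal.mem_span_singleton]
      exact ⟨x * y * r, by ring⟩
    rw [this, add_zero]

/-- The compatible tower of Frobenius lifts mod `pⁿ`. -/
noncomputable def tau {p : ℕ} {A B : Type u} [CommRing A] [CommRing B] [Algebra A B]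
    (hp : p.Prime)
    (g : ∀ n : ℕ, A ⧸ (Ideal.span {(p : A)} ^ n) →+* B ⧸ (Ideal.span {(p : B)} ^ n))
    (hg : ∀ (n : ℕ) (a : A),
      g n (Ideal.Quotient.mk (Ideal.span {(p : A)} ^ n) a) =
        Ideal.Quotient.mk (Ideal.span {(p : B)} ^ n) (algebraMap A B a))
    (hsmooth : ∀ n : ℕ, 1 ≤ n →
      @Algebra.FormallySmooth (A ⧸ (Ideal.span {(p : A)} ^ n))
        (B ⧸ (Ideal.span {(p : B)} ^ n)) _ _ ((g n).toAlgebra))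
    (σ : A →+* A) (hσ : ∀ a : A, σ a - a ^ p ∈ Ideal.span {(p : A)}) :
    ∀ n : ℕ, {t : B →+* B ⧸ Ideal.span {(p : B)} ^ n //
      ∀ a : A, t (algebraMap A B a) =
        Ideal.Quotient.mk (Ideal.span {(p : B)} ^ n) (algebraMap A B (σ a))}
  | 0 => ⟨Ideal.Quotient.mk _, by
      intro a
      rw [Ideal.Quotient.eq, pow_zero, Ideal.one_eq_top]
      exact Submodule.mem_top⟩
  | 1 => ⟨frobOne hp, by
      intro a
      show Ideal.Quotient.mk _ ((algebraMap A B a) ^ p) = _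
      rw [Ideal.Quotient.eq, pow_one]
      obtain ⟨x, hx⟩ := Ideal.mem_span_singleton.mp (hσ a)
      have : algebraMap A B a ^ p - algebraMap A B (σ a)
          = -((p : B) * algebraMap A B x) := by
        have h1 : algebraMap A B (σ a) - algebraMap A B a ^ p = (p : B) * algebraMap A B x := by
          rw [← map_pow, ← map_sub, hx, map_mul, map_natCast]
        linear_combination -h1
      rw [this, Ideal.mem_span_singleton]
      exact ⟨-(algebraMap A B x), by ring⟩⟩
  | (n + 2) =>
    ⟨(step_exists g hg hsmooth σ (n + 1) (by omega)
        (tau hp g hg hsmooth σ hσ (n + 1)).1 (tau hp g hg hsmooth σ hσ (n + 1)).2).choose,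
     (step_exists g hg hsmooth σ (n + 1) (by omega)
        (tau hp g hg hsmooth σ hσ (n + 1)).1 (tau hp g hg hsmooth σ hσ (n + 1)).2).choose_spec.1⟩

theorem tau_step {p : ℕ} {A B : Type u} [CommRing A] [CommRing B] [Algebra A B]
    (hp : p.Prime)
    (g : ∀ n : ℕ, A ⧸ (Ideal.span {(p : A)} ^ n) →+* B ⧸ (Ideal.span {(p : B)} ^ n))
    (hg : ∀ (n : ℕ) (a : A),
      g n (Ideal.Quotient.mk (Ideal.span {(p : A)} ^ n) a) =
        Ideal.Quotient.mk (Ideal.span {(p : B)} ^ n) (algebraMap A B a))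
    (hsmooth : ∀ n : ℕ, 1 ≤ n →
      @Algebra.FormallySmooth (A ⧸ (Ideal.span {(p : A)} ^ n))
        (B ⧸ (Ideal.span {(p : B)} ^ n)) _ _ ((g n).toAlgebra))
    (σ : A →+* A) (hσ : ∀ a : A, σ a - a ^ p ∈ Ideal.span {(p : A)})
    (n : ℕ) (b : B) :
    Ideal.Quotient.factor (Ideal.pow_le_pow_right n.le_succ)
      ((tau hp g hg hsmooth σ hσ (n + 1)).1 b) = (tau hp g hg hsmooth σ hσ n).1 b := by
  match n with
  | 0 =>
    obtain ⟨c, hc⟩ := Ideal.Quotient.mk_surjective ((tau hp g hg hsmooth σ hσ 1).1 b)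
    obtain ⟨d, hd⟩ := Ideal.Quotient.mk_surjective ((tau hp g hg hsmooth σ hσ 0).1 b)
    rw [← hc, ← hd, Ideal.Quotient.factor_mk, Ideal.Quotient.eq, pow_zero, Ideal.one_eq_top]
    exact Submodule.mem_top
  | (m + 1) =>
    exact (step_exists g hg hsmooth σ (m + 1) (by omega)
        (tau hp g hg hsmooth σ hσ (m + 1)).1 (tau hp g hg hsmooth σ hσ (m + 1)).2).choose_spec.2 b
theorem tau_compat {p : ℕ} {A B : Type u} [CommRing A] [CommRing B] [Algebra A B]
    (hp : p.Prime)
    (g : ∀ n : ℕ, A ⧸ (Ideal.span {(p : A)} ^ n) →+* B ⧸ (Ideal.span {(p : B)} ^ n))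
    (hg : ∀ (n : ℕ) (a : A),
      g n (Ideal.Quotient.mk (Ideal.span {(p : A)} ^ n) a) =
        Ideal.Quotient.mk (Ideal.span {(p : B)} ^ n) (algebraMap A B a))
    (hsmooth : ∀ n : ℕ, 1 ≤ n →
      @Algebra.FormallySmooth (A ⧸ (Ideal.span {(p : A)} ^ n))
        (B ⧸ (Ideal.span {(p : B)} ^ n)) _ _ ((g n).toAlgebra))
    (σ : A →+* A) (hσ : ∀ a : A, σ a - a ^ p ∈ Ideal.span {(p : A)})
    (m n : ℕ) (h : m ≤ n) (b : B) :
    Ideal.Quotient.factor (Ideal.pow_le_pow_right h)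
      ((tau hp g hg hsmooth σ hσ n).1 b) = (tau hp g hg hsmooth σ hσ m).1 b := by
  induction n, h using Nat.le_induction with
  | base =>
    obtain ⟨c, hc⟩ := Ideal.Quotient.mk_surjective ((tau hp g hg hsmooth σ hσ m).1 b)
    rw [← hc, Ideal.Quotient.factor_mk]
  | succ n hmn ih =>
    obtain ⟨c, hc⟩ := Ideal.Quotient.mk_surjective ((tau hp g hg hsmooth σ hσ (n + 1)).1 b)
    have h1 := tau_step hp g hg hsmooth σ hσ n b
    rw [← hc, Ideal.Quotient.factor_mk] at h1
    rw [← hc, Ideal.Quotient.factor_mk, ← ih, ← h1, Ideal.Quotient.factor_mk]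


/-- Let `B` be an `A`-algebra which is `p`-adically formally smooth over `A`
(i.e. `B/pⁿB` is formally smooth over `A/pⁿA` for all `n ≥ 1`, via the canonical maps
`g n : A/pⁿA → B/pⁿB`) and `p`-adically separated and complete. Then every Frobenius lift
`σ` on `A` extends to a Frobenius lift `τ` on `B`. -/
theorem stmt15 (p : ℕ) (hp : p.Prime) (A B : Type u) [CommRing A] [CommRing B] [Algebra A B]
    [IsAdicComplete (Ideal.span {(p : B)}) B]
    (g : ∀ n : ℕ, A ⧸ (Ideal.span {(p : A)} ^ n) →+* B ⧸ (Ideal.span {(p : B)} ^ n))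
    (hg : ∀ (n : ℕ) (a : A),
      g n (Ideal.Quotient.mk (Ideal.span {(p : A)} ^ n) a) =
        Ideal.Quotient.mk (Ideal.span {(p : B)} ^ n) (algebraMap A B a))
    (hsmooth : ∀ n : ℕ, 1 ≤ n →
      @Algebra.FormallySmooth (A ⧸ (Ideal.span {(p : A)} ^ n))
        (B ⧸ (Ideal.span {(p : B)} ^ n)) _ _ ((g n).toAlgebra))
    (σ : A →+* A) (hσ : ∀ a : A, σ a - a ^ p ∈ Ideal.span {(p : A)}) :
    ∃ τ : B →+* B,
      (∀ a : A, τ (algebraMap A B a) = algebraMap A B (σ a)) ∧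
      ∀ b : B, τ b - b ^ p ∈ Ideal.span {(p : B)} := by
  have hsmultop : ∀ n : ℕ,
      (Ideal.span {(p : B)} ^ n • ⊤ : Submodule B B) = Ideal.span {(p : B)} ^ n := fun n => by
    rw [Ideal.smul_eq_mul, Ideal.mul_top]
  -- glue the tower by adic completeness
  have key : ∀ b : B, ∃ L : B, ∀ n : ℕ,
      Ideal.Quotient.mk (Ideal.span {(p : B)} ^ n) L = (tau hp g hg hsmooth σ hσ n).1 b := by
    intro b
    choose f hf using fun n => Ideal.Quotient.mk_surjective ((tau hp g hg hsmooth σ hσ n).1 b)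
    have hcau : ∀ {m n : ℕ}, m ≤ n →
        f m ≡ f n [SMOD (Ideal.span {(p : B)} ^ m • ⊤ : Submodule B B)] := by
      intro m n h
      rw [SModEq.sub_mem, hsmultop m, ← Ideal.Quotient.eq, hf m]
      rw [← tau_compat hp g hg hsmooth σ hσ m n h b, ← hf n, Ideal.Quotient.factor_mk]
    obtain ⟨L, hL⟩ :=
      IsPrecomplete.prec (inferInstance : IsPrecomplete (Ideal.span {(p : B)}) B) @hcau
    refine ⟨L, fun n => ?_⟩
    have h2 := hL n
    rw [SModEq.sub_mem, hsmultop n] at h2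
    exact ((Ideal.Quotient.eq.mpr h2).symm).trans (hf n)
  choose τf hτf using key
  have heq : ∀ x y : B,
      (∀ n : ℕ, Ideal.Quotient.mk (Ideal.span {(p : B)} ^ n) x =
        Ideal.Quotient.mk (Ideal.span {(p : B)} ^ n) y) → x = y := by
    intro x y hxy
    have hz : x - y = 0 := by
      refine IsHausdorff.haus
        (inferInstance : IsHausdorff (Ideal.span {(p : B)}) B) (x - y) fun n => ?_
      rw [SModEq.zero, hsmultop n]
      exact Ideal.Quotient.eq.mp (hxy n)
    exact sub_eq_zero.mp hz
  let τ : B →+* B :=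
    { toFun := τf
      map_one' := heq (τf 1) 1 (fun n => by rw [hτf, map_one, map_one])
      map_mul' := fun x y => heq (τf (x * y)) (τf x * τf y) (fun n => by
        rw [hτf, map_mul, map_mul, hτf, hτf])
      map_zero' := heq (τf 0) 0 (fun n => by rw [hτf, map_zero, map_zero])
      map_add' := fun x y => heq (τf (x + y)) (τf x + τf y) (fun n => by
        rw [hτf, map_add, map_add, hτf, hτf]) }
  refine ⟨τ, ?_, ?_⟩
  · intro a
    exact heq (τf (algebraMap A B a)) (algebraMap A B (σ a)) (fun n => by
      rw [hτf]; exact (tau hp g hg hsmooth σ hσ n).2 a)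
  · intro b
    have h1 : Ideal.Quotient.mk (Ideal.span {(p : B)} ^ 1) (τf b) =
        Ideal.Quotient.mk (Ideal.span {(p : B)} ^ 1) (b ^ p) := by
      rw [hτf]; rfl
    have h2 := Ideal.Quotient.eq.mp h1
    rwa [pow_one] at h2
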